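/- For a tiled matrix of size p × q with p ≥ q ≥ 1, the critical path length of the tiled Fibonacci algorithm (with TT kernels) is at most 22q + 6⌈√(2p)⌉. -/

import Mathlib

namespace TiledQR

/-- An elimination `elim(i, piv, k)`: tile `(i, k)` is zeroed out by an orthogonal
transformation combining row `i` with pivot row `piv`. -/
structure Elim where
  i : ℕ
  piv : ℕ
  k : ℕ
deriving DecidableEq

/-- `Before L e f` : the elimination `e` occurs strictly before `f` in the list `L`. -/
def Before (L : List Elim) (e f : Elim) : Prop :=
  ∃ a b : Fin L.length, (a : ℕ) < b ∧ L.get a = e ∧ L.get b = f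

/-- `L` is a valid elimination list for a `p × q` tiled matrix: it contains exactly one
elimination for every sub-diagonal tile `(i, k)` (`1 ≤ k ≤ min p q`, `k < i ≤ p`);
every elimination `elim(i, piv, k)` comes after all eliminations `elim(i, *, k')` and
`elim(piv, *, k')` with `k' < k`, and before the elimination `elim(piv, *, k)` of its
pivot row. -/
def ValidElimList (p q : ℕ) (L : List Elim) : Prop :=
  L.Nodup ∧
  (∀ e ∈ L, 1 ≤ e.k ∧ e.k ≤ min p q ∧ e.k < e.i ∧ e.i ≤ p ∧
      1 ≤ e.piv ∧ e.piv ≤ p ∧ e.piv ≠ e.i) ∧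
  (∀ i k, 1 ≤ k → k ≤ min p q → k < i → i ≤ p → ∃! piv, Elim.mk i piv k ∈ L) ∧
  (∀ a b : Fin L.length, (L.get b).k < (L.get a).k →
      ((L.get b).i = (L.get a).i ∨ (L.get b).i = (L.get a).piv) → (b : ℕ) < a) ∧
  (∀ a b : Fin L.length, (L.get b).k = (L.get a).k →
      (L.get b).i = (L.get a).piv → (a : ℕ) < b)

/-- The tasks of the tiled QR factorization with TT (triangle-on-top-of-triangle)
kernels. -/
inductive Task where
  | GEQRT (r k : ℕ)
  | UNMQR (r k j : ℕ)
  | TTQRT (i piv k : ℕ)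
  | TTMQR (i piv k j : ℕ)
deriving DecidableEq

/-- Weights of the TT kernels, the unit being `n_b ^ 3 / 3` flops. -/
def weight : Task → ℕ
  | .GEQRT _ _ => 4
  | .UNMQR _ _ _ => 6
  | .TTQRT _ _ _ => 2
  | .TTMQR _ _ _ _ => 6

/-- The tasks associated with a `p × q` tiled matrix and an elimination list `L`:
a factorization `GEQRT(r, k)` and updates `UNMQR(r, k, j)` (`k < j ≤ q`) for every tile
`(r, k)` with `k ≤ r ≤ p`, and, for every elimination `elim(i, piv, k)` of `L`, a task
`TTQRT(i, piv, k)` and updates `TTMQR(i, piv, k, j)` for `k < j ≤ q`. -/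
def InTasks (p q : ℕ) (L : List Elim) : Task → Prop
  | .GEQRT r k => 1 ≤ k ∧ k ≤ min p q ∧ k ≤ r ∧ r ≤ p
  | .UNMQR r k j => 1 ≤ k ∧ k ≤ min p q ∧ k ≤ r ∧ r ≤ p ∧ k < j ∧ j ≤ q
  | .TTQRT i piv k => Elim.mk i piv k ∈ L
  | .TTMQR i piv k j => Elim.mk i piv k ∈ L ∧ k < j ∧ j ≤ q

/-- The precedence (dependence) relation between the TT tasks.  Besides the flow
dependencies of the kernels, two tasks reading and writing a common tile
(a pivot tile reused by several eliminations of a column, or a pivot tile that is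
subsequently zeroed out) are serialized in the order of the elimination list. -/
inductive Prec (L : List Elim) : Task → Task → Prop
  | geqrt_unmqr (r k j : ℕ) :
      Prec L (.GEQRT r k) (.UNMQR r k j)
  | geqrt_ttqrt_row (i piv k : ℕ) :
      Prec L (.GEQRT i k) (.TTQRT i piv k)
  | geqrt_ttqrt_piv (i piv k : ℕ) :
      Prec L (.GEQRT piv k) (.TTQRT i piv k)
  | ttqrt_ttmqr (i piv k j : ℕ) :
      Prec L (.TTQRT i piv k) (.TTMQR i piv k j)
  | unmqr_ttmqr_row (i piv k j : ℕ) :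
      Prec L (.UNMQR i k j) (.TTMQR i piv k j)
  | unmqr_ttmqr_piv (i piv k j : ℕ) :
      Prec L (.UNMQR piv k j) (.TTMQR i piv k j)
  | ttmqr_geqrt (a b i k : ℕ) : 2 ≤ k → (a = i ∨ b = i) →
      Prec L (.TTMQR a b (k - 1) k) (.GEQRT i k)
  | ttqrt_serial (i i' piv k : ℕ) :
      Before L (Elim.mk i piv k) (Elim.mk i' piv k) →
      Prec L (.TTQRT i piv k) (.TTQRT i' piv k)
  | ttmqr_serial (i i' piv k j : ℕ) :
      Before L (Elim.mk i piv k) (Elim.mk i' piv k) →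
      Prec L (.TTMQR i piv k j) (.TTMQR i' piv k j)
  | ttqrt_pivot_use (a i piv k : ℕ) :
      Prec L (.TTQRT a i k) (.TTQRT i piv k)
  | ttmqr_pivot_use (a i piv k j : ℕ) :
      Prec L (.TTMQR a i k j) (.TTMQR i piv k j)

/-- A path in the weighted task DAG. -/
def IsPath (p q : ℕ) (L : List Elim) (path : List Task) : Prop :=
  (∀ t ∈ path, InTasks p q L t) ∧ path.Chain' (Prec L)

/-- The critical path length of the tiled algorithm given by the elimination list `L`:
the maximum total weight of a path in the weighted task DAG (equivalently, the makespan
of the earliest-start schedule with unboundedly many processors). -/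
noncomputable def cpLength (p q : ℕ) (L : List Elim) : ℕ :=
  sSup { w : ℕ | ∃ path : List Task, IsPath p q L path ∧ w = (path.map weight).sum }
/-- The least positive integer `x` such that `x * (x + 1) / 2 ≥ p - 1`. -/
noncomputable def fibX (p : ℕ) : ℕ := sInf {x : ℕ | 1 ≤ x ∧ p - 1 ≤ x * (x + 1) / 2}

/-- The least positive integer `y` such that `i ≤ y * (y + 1) / 2 + 1`. -/
noncomputable def fibY (i : ℕ) : ℕ := sInf {y : ℕ | 1 ≤ y ∧ i ≤ y * (y + 1) / 2 + 1}

/-- The coarse time step at which the Fibonacci scheme zeroes out tile `(i, k)`: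
`coarse(i, 1) = x - y + 1` and `coarse(i, k) = coarse(i - 1, k - 1) + 2`. -/
noncomputable def fibCoarse (p i k : ℕ) : ℕ :=
  (fibX p - fibY (i - k + 1) + 1) + 2 * (k - 1)

/-- The number of tiles of column `k` zeroed out at the same coarse step as `(i, k)`. -/
noncomputable def fibZ (p i k : ℕ) : ℕ :=
  ((Finset.Icc (k + 1) p).filter fun i' => fibCoarse p i' k = fibCoarse p i k).card

/-- Fibonacci pivot: a bunch of `z` tiles zeroed out at the same step use the `z` rows
just above them, paired in the natural order. -/
noncomputable def fibPiv (p i k : ℕ) : ℕ := i - fibZ p i k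

/-- The elimination list of the tiled Fibonacci algorithm: eliminations are listed by
increasing coarse step and, within a step, by increasing row index. -/
noncomputable def fibList (p q : ℕ) : List Elim :=
  (List.range' 1 (fibX p + 2 * q)).flatMap fun s =>
    (List.range' 1 p).flatMap fun i =>
      (List.range' 1 (min p q)).filterMap fun k =>
        if k < i ∧ fibCoarse p i k = s then some (Elim.mk i (fibPiv p i k) k) else none
/-! ### Auxiliary lemmas for the proof -/

private def tri (t : ℕ) : ℕ := t * (t + 1) / 2

lemma tri_succ (t : ℕ) : tri (t + 1) = tri t + (t + 1) := by
  show (t + 1) * (t + 2) / 2 = t * (t + 1) / 2 + (t + 1)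
  rw [show (t + 1) * (t + 2) = t * (t + 1) + (t + 1) * 2 by ring,
    Nat.add_mul_div_right _ _ (by norm_num)]

lemma tri_mono {a b : ℕ} (h : a ≤ b) : tri a ≤ tri b :=
  Nat.div_le_div_right (Nat.mul_le_mul h (by omega))

lemma fibY_mem (m : ℕ) : 1 ≤ fibY m ∧ m ≤ tri (fibY m) + 1 := by
  have hne : {y : ℕ | 1 ≤ y ∧ m ≤ y * (y + 1) / 2 + 1}.Nonempty := by
    refine ⟨m + 1, by omega, ?_⟩
    have h2 : (m + 1) * 2 ≤ (m + 1) * (m + 1 + 1) := Nat.mul_le_mul_left _ (by omega)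
    have := (Nat.le_div_iff_mul_le (by norm_num : 0 < 2)).2 h2
    omega
  exact Nat.sInf_mem hne

lemma fibY_pos (m : ℕ) : 1 ≤ fibY m := (fibY_mem m).1

lemma fibY_le_tri (m : ℕ) : m ≤ tri (fibY m) + 1 := (fibY_mem m).2

lemma fibY_le_iff {t : ℕ} (ht : 1 ≤ t) (m : ℕ) : fibY m ≤ t ↔ m ≤ tri t + 1 := by
  constructor
  · intro h
    have := fibY_le_tri m
    have := tri_mono h
    omega
  · intro h
    exact Nat.sInf_le ⟨ht, h⟩

lemma fibY_mono {m m' : ℕ} (h : m ≤ m') : fibY m ≤ fibY m' := by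
  rw [fibY_le_iff (fibY_pos m')]
  have := fibY_le_tri m'
  omega

lemma fibX_eq_fibY (p : ℕ) : fibX p = fibY p := by
  unfold fibX fibY
  congr 1
  ext y
  constructor <;> rintro ⟨h1, h2⟩ <;> exact ⟨h1, by omega⟩

lemma fibY_le_x {p m : ℕ} (hm : m ≤ p) : fibY m ≤ fibX p := by
  rw [fibX_eq_fibY]; exact fibY_mono hm

lemma coarse_eq_iff {p k i i' : ℕ} (hk : 1 ≤ k) (hki : k ≤ i) (hki' : k ≤ i')
    (hi : i ≤ p) (hi' : i' ≤ p) :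
    fibCoarse p i' k = fibCoarse p i k ↔ fibY (i' - k + 1) = fibY (i - k + 1) := by
  have h1 : fibY (i - k + 1) ≤ fibX p := fibY_le_x (by omega)
  have h2 : fibY (i' - k + 1) ≤ fibX p := fibY_le_x (by omega)
  unfold fibCoarse
  omega
lemma fibZ_congr {p k i i' : ℕ} (h : fibCoarse p i' k = fibCoarse p i k) :
    fibZ p i' k = fibZ p i k := by
  unfold fibZ
  simp only [h]

lemma fib_struct {p k i : ℕ} (hk : 1 ≤ k) (hki : k < i) (hip : i ≤ p) :
    1 ≤ fibZ p i k ∧ fibZ p i k ≤ i - k ∧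
    (fibY (i - k + 1) = 1 → fibPiv p i k = k) ∧
    (2 ≤ fibY (i - k + 1) →
      tri (fibY (i - k + 1) - 2) + k ≤ fibPiv p i k ∧
      fibPiv p i k ≤ tri (fibY (i - k + 1) - 1) + k) := by
  have ht1 : 1 ≤ fibY (i - k + 1) := fibY_pos _
  have hYi : i - k + 1 ≤ tri (fibY (i - k + 1)) + 1 := fibY_le_tri _
  rcases Nat.lt_or_ge (fibY (i - k + 1)) 2 with ht2 | ht2
  · -- t = 1
    have ht : fibY (i - k + 1) = 1 := by omega
    have htri1 : tri 1 = 1 := rfl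
    have hik : i = k + 1 := by rw [ht] at hYi; omega
    have hF : ((Finset.Icc (k + 1) p).filter
        fun i' => fibCoarse p i' k = fibCoarse p i k) = {k + 1} := by
      ext i'
      simp only [Finset.mem_filter, Finset.mem_Icc, Finset.mem_singleton]
      constructor
      · rintro ⟨⟨h1, h2⟩, h3⟩
        have hYe : fibY (i' - k + 1) = 1 := by
          rw [(coarse_eq_iff hk (by omega) (by omega) hip h2).1 h3, ht]
        have : i' - k + 1 ≤ tri 1 + 1 := by
          have := fibY_le_tri (i' - k + 1); rw [hYe] at this; exact this
        omega
      · rintro rfl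
        exact ⟨⟨le_refl _, by omega⟩, by rw [hik]⟩
    have hz : fibZ p i k = 1 := by unfold fibZ; rw [hF]; rfl
    unfold fibPiv
    refine ⟨by omega, by omega, fun _ => by omega, fun h => by omega⟩
  · -- t ≥ 2
    obtain ⟨a, ha⟩ : ∃ a, fibY (i - k + 1) = a + 2 := ⟨fibY (i - k + 1) - 2, by omega⟩
    have hTa : tri (a + 1) = tri a + (a + 1) := tri_succ a
    have hTa2 : tri (a + 2) = tri (a + 1) + (a + 2) := tri_succ (a + 1)
    have hF : ((Finset.Icc (k + 1) p).filter
        fun i' => fibCoarse p i' k = fibCoarse p i k) =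
        Finset.Icc (tri (a + 1) + k + 1) (min p (tri (a + 2) + k)) := by
      ext i'
      simp only [Finset.mem_filter, Finset.mem_Icc, le_min_iff]
      constructor
      · rintro ⟨⟨h1, h2⟩, h3⟩
        have hYe : fibY (i' - k + 1) = a + 2 := by
          rw [(coarse_eq_iff hk (by omega) (by omega) hip h2).1 h3, ha]
        have hup : i' - k + 1 ≤ tri (a + 2) + 1 := by
          have := fibY_le_tri (i' - k + 1); rw [hYe] at this; exact this
        have hlow : ¬ (i' - k + 1 ≤ tri (a + 1) + 1) := by
          intro hle
          have : fibY (i' - k + 1) ≤ a + 1 := (fibY_le_iff (by omega) _).2 hle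
          omega
        exact ⟨by omega, h2, by omega⟩
      · rintro ⟨h1, h2p, h2⟩
        have hYe : fibY (i' - k + 1) = a + 2 := by
          have hle : fibY (i' - k + 1) ≤ a + 2 :=
            (fibY_le_iff (by omega) _).2 (by omega)
          have hnot : ¬ fibY (i' - k + 1) ≤ a + 1 := by
            intro h
            have := (fibY_le_iff (by omega) _).1 h
            omega
          omega
        refine ⟨⟨by omega, h2p⟩, (coarse_eq_iff hk (by omega) (by omega) hip h2p).2 ?_⟩
        rw [hYe, ha]
    have hcard : fibZ p i k = min p (tri (a + 2) + k) + 1 - (tri (a + 1) + k + 1) := by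
      unfold fibZ; rw [hF, Nat.card_Icc]
    have hiF : tri (a + 1) + k + 1 ≤ i ∧ i ≤ min p (tri (a + 2) + k) := by
      have : i ∈ Finset.Icc (tri (a + 1) + k + 1) (min p (tri (a + 2) + k)) := by
        rw [← hF]
        simp only [Finset.mem_filter, Finset.mem_Icc]
        exact ⟨⟨by omega, hip⟩, trivial⟩
      simpa [Finset.mem_Icc] using this
    have hm1 : min p (tri (a + 2) + k) ≤ p := min_le_left _ _
    have hm2 : min p (tri (a + 2) + k) ≤ tri (a + 2) + k := min_le_right _ _
    have h2a : fibY (i - k + 1) - 2 = a := by omega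
    have h1a : fibY (i - k + 1) - 1 = a + 1 := by omega
    rw [h2a, h1a]
    unfold fibPiv
    refine ⟨by omega, by omega, fun h => by omega, fun h => ⟨by omega, by omega⟩⟩
lemma piv_lemmas {p k i : ℕ} (hk : 1 ≤ k) (hki : k < i) (hip : i ≤ p) :
    k ≤ fibPiv p i k ∧ fibPiv p i k < i ∧
    fibY (i - k + 1) ≤ fibY (fibPiv p i k - k + 2) + 1 ∧
    (k < fibPiv p i k → fibY (fibPiv p i k - k + 1) < fibY (i - k + 1)) := by
  obtain ⟨hz1, hz2, hcase1, hcase2⟩ := fib_struct hk hki hip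
  have ht1 : 1 ≤ fibY (i - k + 1) := fibY_pos _
  rcases Nat.lt_or_ge (fibY (i - k + 1)) 2 with ht2 | ht2
  · have ht : fibY (i - k + 1) = 1 := by omega
    have hp := hcase1 ht
    have hzle : fibZ p i k ≤ i := by omega
    refine ⟨by omega, by unfold fibPiv at hp ⊢; omega, by omega, fun h => by omega⟩
  · obtain ⟨hb1, hb2⟩ := hcase2 ht2
    obtain ⟨a, ha⟩ : ∃ a, fibY (i - k + 1) = a + 2 := ⟨fibY (i - k + 1) - 2, by omega⟩
    have h2a : fibY (i - k + 1) - 2 = a := by omega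
    have h1a : fibY (i - k + 1) - 1 = a + 1 := by omega
    rw [h2a] at hb1; rw [h1a] at hb2
    have hpivk : k ≤ fibPiv p i k := by
      have : k ≤ tri a + k := by omega
      omega
    refine ⟨hpivk, by unfold fibPiv at *; omega, ?_, ?_⟩
    · -- Y(i-k+1) ≤ Y(piv-k+2)+1
      have hlow : tri a + 1 < fibPiv p i k - k + 2 := by omega
      have : a + 1 ≤ fibY (fibPiv p i k - k + 2) := by
        by_contra hcon
        push_neg at hcon
        rcases Nat.eq_zero_or_pos a with rfl | hapos
        · have := fibY_pos (fibPiv p i k - k + 2); omega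
        · have : fibY (fibPiv p i k - k + 2) ≤ a := by omega
          have := (fibY_le_iff hapos _).1 this
          omega
      omega
    · -- piv > k case : Y(piv-k+1) < Y(i-k+1)
      intro hpk
      have : fibPiv p i k - k + 1 ≤ tri (a + 1) + 1 := by omega
      have : fibY (fibPiv p i k - k + 1) ≤ a + 1 := (fibY_le_iff (by omega) _).2 this
      omega

lemma mem_fibList {p q : ℕ} {e : Elim} :
    e ∈ fibList p q ↔ ∃ i k, 1 ≤ k ∧ k ≤ min p q ∧ k < i ∧ i ≤ p ∧
      e = Elim.mk i (fibPiv p i k) k := by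
  unfold fibList
  simp only [List.mem_flatMap, List.mem_filterMap, List.mem_range']
  constructor
  · rintro ⟨s, _, i, ⟨ji, hji, hieq⟩, k, ⟨jk, hjk, hkeq⟩, hite⟩
    split at hite
    · rename_i hcond
      refine ⟨i, k, by omega, by omega, hcond.1, by omega, (Option.some_injective _ hite).symm⟩
    · exact absurd hite (by simp)
  · rintro ⟨i, k, hk1, hkmin, hki, hip, rfl⟩
    have hY : 1 ≤ fibY (i - k + 1) := fibY_pos _
    have hYx : fibY (i - k + 1) ≤ fibX p := fibY_le_x (by omega)
    have hc1 : 1 ≤ fibCoarse p i k := by unfold fibCoarse; omega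
    have hc2 : fibCoarse p i k ≤ fibX p + 2 * q := by
      have : k ≤ q := by omega
      unfold fibCoarse
      omega
    refine ⟨fibCoarse p i k, ⟨fibCoarse p i k - 1, by omega, by omega⟩,
      i, ⟨i - 1, by omega, by omega⟩, k, ⟨k - 1, by omega, by omega⟩, ?_⟩
    rw [if_pos ⟨hki, rfl⟩]
lemma pairwise_lt_range' (s n : ℕ) : List.Pairwise (· < ·) (List.range' s n) := by
  rw [List.pairwise_iff_get]
  intro a b hab
  simp only [List.get_eq_getElem, List.getElem_range'_1]
  have : (a : ℕ) < (b : ℕ) := hab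
  omega

lemma block_spec {p q s : ℕ} {e : Elim}
    (h : e ∈ (List.range' 1 p).flatMap fun i =>
      (List.range' 1 (min p q)).filterMap fun k =>
        if k < i ∧ fibCoarse p i k = s then some (Elim.mk i (fibPiv p i k) k) else none) :
    fibCoarse p e.i e.k = s := by
  simp only [List.mem_flatMap, List.mem_filterMap] at h
  obtain ⟨i, _, k, _, hite⟩ := h
  split at hite
  · rename_i hcond
    have := (Option.some_injective _ hite)
    rw [← this]
    exact hcond.2
  · exact absurd hite (by simp)

lemma fibList_pairwise (p q : ℕ) :
    (fibList p q).Pairwise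
      (fun e f => fibCoarse p e.i e.k ≤ fibCoarse p f.i f.k ∧ e ≠ f) := by
  unfold fibList
  rw [List.pairwise_flatMap]
  constructor
  · intro s _
    rw [List.pairwise_flatMap]
    constructor
    · intro i _
      rw [List.pairwise_filterMap]
      apply List.Pairwise.imp ?_ (pairwise_lt_range' 1 (min p q))
      intro k k' hkk' b hb b' hb'
      have hbk : b.k = k ∧ fibCoarse p b.i b.k = s := by
        split at hb
        · rename_i hcond
          have := Option.some_injective _ hb
          rw [← this]
          exact ⟨rfl, hcond.2⟩
        · exact absurd hb (by simp)
      have hbk' : b'.k = k' ∧ fibCoarse p b'.i b'.k = s := by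
        split at hb'
        · rename_i hcond
          have := Option.some_injective _ hb'
          rw [← this]
          exact ⟨rfl, hcond.2⟩
        · exact absurd hb' (by simp)
      refine ⟨by omega, fun hbe => by rw [hbe] at hbk; omega⟩
    · apply List.Pairwise.imp ?_ (pairwise_lt_range' 1 p)
      intro i i' hii' b hb b' hb'
      simp only [List.mem_filterMap] at hb hb'
      obtain ⟨k, _, hbk⟩ := hb
      obtain ⟨k', _, hbk'⟩ := hb'
      have h1 : b.i = i ∧ fibCoarse p b.i b.k = s := by
        split at hbk
        · rename_i hcond
          have := Option.some_injective _ hbk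
          rw [← this]
          exact ⟨rfl, hcond.2⟩
        · exact absurd hbk (by simp)
      have h2 : b'.i = i' ∧ fibCoarse p b'.i b'.k = s := by
        split at hbk'
        · rename_i hcond
          have := Option.some_injective _ hbk'
          rw [← this]
          exact ⟨rfl, hcond.2⟩
        · exact absurd hbk' (by simp)
      refine ⟨by omega, fun hbe => by rw [hbe] at h1; omega⟩
  · apply List.Pairwise.imp ?_ (pairwise_lt_range' 1 (fibX p + 2 * q))
    intro s s' hss' b hb b' hb'
    have h1 := block_spec (q := q) hb
    have h2 := block_spec (q := q) hb'
    refine ⟨by omega, fun hbe => by rw [hbe] at h1; omega⟩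

lemma before_fibList {p q : ℕ} {e f : Elim} (h : Before (fibList p q) e f) :
    fibCoarse p e.i e.k ≤ fibCoarse p f.i f.k ∧ e ≠ f := by
  obtain ⟨a, b, hab, ha, hb⟩ := h
  have := (List.pairwise_iff_get.1 (fibList_pairwise p q)) a b hab
  rw [ha, hb] at this
  exact this
lemma elim_spec {p q i piv k : ℕ} (h : Elim.mk i piv k ∈ fibList p q) :
    1 ≤ k ∧ k ≤ min p q ∧ k < i ∧ i ≤ p ∧ piv = fibPiv p i k := by
  rw [mem_fibList] at h
  obtain ⟨i', k', h1, h2, h3, h4, heq⟩ := h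
  rw [Elim.mk.injEq] at heq
  obtain ⟨rfl, rfl, rfl⟩ := heq
  exact ⟨h1, h2, h3, h4, rfl⟩

lemma serial_lt {p q i i' piv k : ℕ}
    (hb : Before (fibList p q) (Elim.mk i piv k) (Elim.mk i' piv k))
    (h1 : Elim.mk i piv k ∈ fibList p q) (h2 : Elim.mk i' piv k ∈ fibList p q) :
    fibY (i' - k + 1) < fibY (i - k + 1) := by
  obtain ⟨hc, hne⟩ := before_fibList hb
  obtain ⟨hk1, _, hki, hip, hpiv⟩ := elim_spec h1
  obtain ⟨_, _, hki', hip', hpiv'⟩ := elim_spec h2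
  have hY1x : fibY (i - k + 1) ≤ fibX p := fibY_le_x (by omega)
  have hY2x : fibY (i' - k + 1) ≤ fibX p := fibY_le_x (by omega)
  by_cases hceq : fibCoarse p i k = fibCoarse p i' k
  · exfalso
    have hzz : fibZ p i k = fibZ p i' k := fibZ_congr hceq
    obtain ⟨hz1, hz2, -, -⟩ := fib_struct hk1 hki hip
    obtain ⟨hz1', hz2', -, -⟩ := fib_struct hk1 hki' hip'
    have hii : i = i' := by unfold fibPiv at hpiv hpiv'; omega
    exact hne (by rw [hii])
  · simp only [fibCoarse] at hc hceq
    omega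

noncomputable def sig (p m : ℕ) : ℕ := fibX p + 1 - fibY m

noncomputable def phi (p : ℕ) : Task → ℕ
  | .GEQRT i k => if k ≤ 1 then 4 else 22 * (k - 1) + 6 * sig p (i - k + 2) + 4
  | .UNMQR i k _ => (if k ≤ 1 then 4 else 22 * (k - 1) + 6 * sig p (i - k + 2) + 4) + 6
  | .TTQRT i _ k => 22 * (k - 1) + 6 * sig p (i - k + 1) + 16
  | .TTMQR i _ k _ => 22 * (k - 1) + 6 * sig p (i - k + 1) + 22

lemma edge_le {p q : ℕ} {u v : Task} (huv : Prec (fibList p q) u v)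
    (hu : InTasks p q (fibList p q) u) (hv : InTasks p q (fibList p q) v) :
    phi p u + weight v ≤ phi p v := by
  cases huv with
  | geqrt_unmqr r k j =>
      simp only [phi, weight]
      exact le_rfl
  | geqrt_ttqrt_row i piv k =>
      have hm : Elim.mk i piv k ∈ fibList p q := hv
      obtain ⟨hk1, hkm, hki, hip, hpiv⟩ := elim_spec hm
      simp only [phi, weight]
      by_cases hk : k ≤ 1
      · rw [if_pos hk]; omega
      · rw [if_neg hk]
        have hmono : fibY (i - k + 1) ≤ fibY (i - k + 2) := fibY_mono (by omega)
        unfold sig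
        omega
  | geqrt_ttqrt_piv i piv k =>
      have hm : Elim.mk i piv k ∈ fibList p q := hv
      obtain ⟨hk1, hkm, hki, hip, hpiv⟩ := elim_spec hm
      obtain ⟨hp1, hp2, hp3, -⟩ := piv_lemmas hk1 hki hip
      rw [← hpiv] at hp1 hp2 hp3
      have hYx : fibY (i - k + 1) ≤ fibX p := fibY_le_x (by omega)
      simp only [phi, weight]
      by_cases hk : k ≤ 1
      · rw [if_pos hk]; omega
      · rw [if_neg hk]
        unfold sig
        omega
  | ttqrt_ttmqr i piv k j =>
      simp only [phi, weight]
      omega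
  | unmqr_ttmqr_row i piv k j =>
      have hm : Elim.mk i piv k ∈ fibList p q := hv.1
      obtain ⟨hk1, hkm, hki, hip, hpiv⟩ := elim_spec hm
      simp only [phi, weight]
      by_cases hk : k ≤ 1
      · rw [if_pos hk]; omega
      · rw [if_neg hk]
        have hmono : fibY (i - k + 1) ≤ fibY (i - k + 2) := fibY_mono (by omega)
        unfold sig
        omega
  | unmqr_ttmqr_piv i piv k j =>
      have hm : Elim.mk i piv k ∈ fibList p q := hv.1
      obtain ⟨hk1, hkm, hki, hip, hpiv⟩ := elim_spec hm
      obtain ⟨hp1, hp2, hp3, -⟩ := piv_lemmas hk1 hki hip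
      rw [← hpiv] at hp1 hp2 hp3
      have hYx : fibY (i - k + 1) ≤ fibX p := fibY_le_x (by omega)
      simp only [phi, weight]
      by_cases hk : k ≤ 1
      · rw [if_pos hk]; omega
      · rw [if_neg hk]
        unfold sig
        omega
  | ttmqr_geqrt a b i k hk2 hab =>
      have hm : Elim.mk a b (k - 1) ∈ fibList p q := hu.1
      obtain ⟨hk1', hkm', hka, hap, hb⟩ := elim_spec hm
      obtain ⟨hik1, hik2, hik3, hik4⟩ := hv
      simp only [phi, weight]
      rw [if_neg (by omega)]
      rcases hab with heq | heq
      · rw [show a - (k - 1) + 1 = i - k + 2 from by omega]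
        omega
      · obtain ⟨hp1, hp2, -, -⟩ := piv_lemmas hk1' hka hap
        rw [← hb, heq] at hp1 hp2
        have hmono : fibY (i - (k - 1) + 1) ≤ fibY (a - (k - 1) + 1) :=
          fibY_mono (by omega)
        rw [show i - k + 2 = i - (k - 1) + 1 from by omega]
        unfold sig
        omega
  | ttqrt_serial i i' piv k hbef =>
      have hm : Elim.mk i piv k ∈ fibList p q := hu
      have hm' : Elim.mk i' piv k ∈ fibList p q := hv
      have hlt := serial_lt hbef hm hm'
      obtain ⟨hk1, _, hki', hip', _⟩ := elim_spec hm'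
      have hYx : fibY (i' - k + 1) ≤ fibX p := fibY_le_x (by omega)
      simp only [phi, weight]
      unfold sig
      omega
  | ttmqr_serial i i' piv k j hbef =>
      have hm : Elim.mk i piv k ∈ fibList p q := hu.1
      have hm' : Elim.mk i' piv k ∈ fibList p q := hv.1
      have hlt := serial_lt hbef hm hm'
      obtain ⟨hk1, _, hki', hip', _⟩ := elim_spec hm'
      have hYx : fibY (i' - k + 1) ≤ fibX p := fibY_le_x (by omega)
      simp only [phi, weight]
      unfold sig
      omega
  | ttqrt_pivot_use a i piv k =>
      have hm : Elim.mk a i k ∈ fibList p q := hu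
      have hm' : Elim.mk i piv k ∈ fibList p q := hv
      obtain ⟨hk1, _, hka, hap, hi⟩ := elim_spec hm
      obtain ⟨_, _, hki, hip, _⟩ := elim_spec hm'
      obtain ⟨-, -, -, hp4⟩ := piv_lemmas hk1 hka hap
      rw [← hi] at hp4
      have hlt := hp4 hki
      have hYx : fibY (i - k + 1) ≤ fibX p := fibY_le_x (by omega)
      simp only [phi, weight]
      unfold sig
      omega
  | ttmqr_pivot_use a i piv k j =>
      have hm : Elim.mk a i k ∈ fibList p q := hu.1
      have hm' : Elim.mk i piv k ∈ fibList p q := hv.1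
      obtain ⟨hk1, _, hka, hap, hi⟩ := elim_spec hm
      obtain ⟨_, _, hki, hip, _⟩ := elim_spec hm'
      obtain ⟨-, -, -, hp4⟩ := piv_lemmas hk1 hka hap
      rw [← hi] at hp4
      have hlt := hp4 hki
      have hYx : fibY (i - k + 1) ≤ fibX p := fibY_le_x (by omega)
      simp only [phi, weight]
      unfold sig
      omega
lemma weight_le_phi (p : ℕ) (t : Task) : weight t ≤ phi p t := by
  cases t <;> simp only [phi, weight] <;> first
    | (split <;> omega)
    | omega

lemma phi_le_bound {p q : ℕ} {t : Task} (hq : 1 ≤ q)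
    (ht : InTasks p q (fibList p q) t) : phi p t ≤ 22 * q + 6 * fibX p := by
  have hsig : ∀ m, sig p m ≤ fibX p := by
    intro m
    have := fibY_pos m
    unfold sig
    omega
  cases t with
  | GEQRT r k =>
      obtain ⟨h1, h2, h3, h4⟩ := ht
      have := hsig (r - k + 2)
      simp only [phi]
      split <;> omega
  | UNMQR r k j =>
      obtain ⟨h1, h2, h3, h4, h5, h6⟩ := ht
      have := hsig (r - k + 2)
      simp only [phi]
      split <;> omega
  | TTQRT i piv k =>
      obtain ⟨h1, h2, h3, h4, h5⟩ := elim_spec ht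
      have := hsig (i - k + 1)
      simp only [phi]
      omega
  | TTMQR i piv k j =>
      obtain ⟨h1, h2, h3, h4, h5⟩ := elim_spec ht.1
      have := hsig (i - k + 1)
      have hkq : k ≤ q := by omega
      simp only [phi]
      omega

lemma chain_sum_le {p q : ℕ} :
    ∀ (rest : List Task) (t : Task),
      (∀ u ∈ t :: rest, InTasks p q (fibList p q) u) →
      List.Chain' (Prec (fibList p q)) (t :: rest) →
      phi p t + (rest.map weight).sum ≤
        phi p ((t :: rest).getLast (List.cons_ne_nil t rest)) := by
  intro rest
  induction rest with
  | nil => intro t _ _; simp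
  | cons t' r ih =>
      intro t hmem hch
      replace hch := List.isChain_cons_cons.1 hch
      have h1 := edge_le hch.1 (hmem t (by simp)) (hmem t' (by simp))
      have h2 := ih t' (fun u hu => hmem u (List.mem_cons_of_mem _ hu)) hch.2
      rw [List.getLast_cons (List.cons_ne_nil t' r)]
      calc phi p t + ((t' :: r).map weight).sum
          = (phi p t + weight t') + (r.map weight).sum := by
            simp [List.map_cons, List.sum_cons]; ring
        _ ≤ phi p t' + (r.map weight).sum := by omega
        _ ≤ _ := h2

lemma fibX_le_ceil (p : ℕ) (hp : 1 ≤ p) :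
    fibX p ≤ ⌈Real.sqrt (2 * (p : ℝ))⌉₊ := by
  set N := ⌈Real.sqrt (2 * (p : ℝ))⌉₊ with hN
  have hpos : (0 : ℝ) < 2 * (p : ℝ) := by positivity
  have h1 : 1 ≤ N := Nat.one_le_ceil_iff.2 (Real.sqrt_pos.2 hpos)
  have hle : Real.sqrt (2 * (p : ℝ)) ≤ (N : ℝ) := Nat.le_ceil _
  have hsq : (2 * (p : ℝ)) ≤ (N : ℝ) * (N : ℝ) := by
    have := Real.sq_sqrt (le_of_lt hpos)
    nlinarith [Real.sqrt_nonneg (2 * (p : ℝ))]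
  have hnat : 2 * p ≤ N * N := by exact_mod_cast hsq
  apply Nat.sInf_le
  refine ⟨h1, ?_⟩
  have h2 : p * 2 ≤ N * (N + 1) := by nlinarith
  have := (Nat.le_div_iff_mul_le (by norm_num : 0 < 2)).2 h2
  omega
/-- **Theorem 2 (2), Fibonacci.** The critical path length of the tiled Fibonacci
algorithm (with TT kernels) on a `p × q` matrix with `p ≥ q ≥ 1` is at most
`22q + 6⌈√(2p)⌉`. -/
theorem fibonacci_cpLength_le (p q : ℕ) (hq : 1 ≤ q) (hpq : q ≤ p) :
    cpLength p q (fibList p q) ≤ 22 * q + 6 * ⌈Real.sqrt (2 * (p : ℝ))⌉₊ := by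
  have hbound : 22 * q + 6 * fibX p ≤ 22 * q + 6 * ⌈Real.sqrt (2 * (p : ℝ))⌉₊ := by
    have := fibX_le_ceil p (le_trans hq hpq)
    omega
  unfold cpLength
  apply csSup_le
  · exact ⟨0, [], ⟨fun t ht => absurd ht List.not_mem_nil, List.isChain_nil⟩, rfl⟩
  · rintro w ⟨path, ⟨hmem, hch⟩, rfl⟩
    cases path with
    | nil => simp
    | cons t rest =>
        have h1 := chain_sum_le rest t hmem hch
        have h2 := weight_le_phi p t
        have h3 : phi p ((t :: rest).getLast (List.cons_ne_nil t rest)) ≤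
            22 * q + 6 * fibX p :=
          phi_le_bound hq (hmem _ (List.getLast_mem _))
        simp only [List.map_cons, List.sum_cons]
        omega

end TiledQR
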